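/- For the automorphism D_{-1} of the standard theta group G(K) = G_m × K × K^D given by (α,x,l) ↦ (α,-x,l^{-1}), and any integer m, every group element g satisfies D_m(g) = g^{(m²+m)/2} · D_{-1}(g)^{(m²-m)/2}, where D_m(α,x,l) = (α^{m²}, mx, l^m). -/

import Mathlib

variable (k K : Type*) [Field k] [AddCommGroup K]

/-- The standard (Heisenberg) theta group `G(K) = kˣ × K × K^D`. -/
def ThetaGroup := kˣ × K × AddChar K kˣ

namespace ThetaGroup

variable {k K}

instance : Group (ThetaGroup k K) where
  mul g h := (g.1 * h.1 * h.2.2 g.2.1, g.2.1 + h.2.1, g.2.2 * h.2.2)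
  one := (1, 0, 1)
  inv g := ((g.1)⁻¹ * g.2.2 g.2.1, -g.2.1, (g.2.2)⁻¹)
  mul_assoc a b c := by
    refine Prod.ext ?_ (Prod.ext ?_ ?_)
    · show a.1 * b.1 * b.2.2 a.2.1 * c.1 * c.2.2 (a.2.1 + b.2.1)
        = a.1 * (b.1 * c.1 * c.2.2 b.2.1) * (b.2.2 * c.2.2) a.2.1
      simp only [AddChar.map_add_eq_mul, AddChar.mul_apply]
      simp [mul_assoc, mul_comm, mul_left_comm]
    · show a.2.1 + b.2.1 + c.2.1 = a.2.1 + (b.2.1 + c.2.1)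
      abel
    · show a.2.2 * b.2.2 * c.2.2 = a.2.2 * (b.2.2 * c.2.2)
      exact mul_assoc _ _ _
  one_mul a := by
    refine Prod.ext ?_ (Prod.ext ?_ ?_)
    · show (1:kˣ) * a.1 * a.2.2 0 = a.1; simp
    · show (0:K) + a.2.1 = a.2.1; exact zero_add _
    · show 1 * a.2.2 = a.2.2; exact one_mul a.2.2
  mul_one a := by
    refine Prod.ext ?_ (Prod.ext ?_ ?_)
    · show a.1 * 1 * (1 : AddChar K kˣ) a.2.1 = a.1; simp
    · show a.2.1 + (0:K) = a.2.1; exact add_zero _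
    · show a.2.2 * 1 = a.2.2; exact mul_one a.2.2
  inv_mul_cancel a := by
    refine Prod.ext ?_ (Prod.ext ?_ ?_)
    · show (a.1)⁻¹ * a.2.2 a.2.1 * a.1 * a.2.2 (-a.2.1) = 1
      rw [AddChar.map_neg_eq_inv]
      simp [mul_assoc, mul_comm, mul_left_comm]
    · show -a.2.1 + a.2.1 = 0; simp
    · show (a.2.2)⁻¹ * a.2.2 = 1; simp

/-- The map `D_m : G(K) → G(K)`, `(α, x, l) ↦ (α^{m²}, m·x, l^m)`. -/
def Dm (m : ℤ) (g : ThetaGroup k K) : ThetaGroup k K :=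
  (g.1 ^ (m ^ 2), m • g.2.1, g.2.2 ^ m)

/-- The map `D_{-1} : G(K) → G(K)`, `(α, x, l) ↦ (α, -x, l⁻¹)`. -/
def Dneg1 (g : ThetaGroup k K) : ThetaGroup k K :=
  (g.1, -g.2.1, (g.2.2)⁻¹)


lemma mul_def' (a b : ThetaGroup k K) :
    a * b = (a.1 * b.1 * b.2.2 a.2.1, a.2.1 + b.2.1, a.2.2 * b.2.2) := rfl

lemma inv_def' (a : ThetaGroup k K) :
    a⁻¹ = ((a.1)⁻¹ * a.2.2 a.2.1, -a.2.1, (a.2.2)⁻¹) := rfl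

lemma two_mul_ediv (n : ℤ) : 2 * (n * (n - 1) / 2) = n * (n - 1) := by
  obtain ⟨p, hp⟩ : Even (n * (n - 1)) := by
    have h := Int.even_mul_succ_self (n - 1)
    have : (n - 1) * (n - 1 + 1) = n * (n - 1) := by ring
    rwa [this] at h
  omega

lemma zpow_def' (g : ThetaGroup k K) (n : ℤ) :
    g ^ n = (g.1 ^ n * (g.2.2 g.2.1) ^ (n * (n - 1) / 2), n • g.2.1, (g.2.2) ^ n) := by
  induction n using Int.induction_on with
  | zero =>
    show (1 : ThetaGroup k K) = _
    norm_num
    rfl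
  | succ i ih =>
    have key : ((i : ℤ) + 1) * ((i : ℤ) + 1 - 1) / 2 = (i : ℤ) * ((i : ℤ) - 1) / 2 + i := by
      have h1 := two_mul_ediv (i : ℤ)
      have h2 := two_mul_ediv ((i : ℤ) + 1)
      have h3 : ((i : ℤ) + 1) * ((i : ℤ) + 1 - 1) = (i : ℤ) * ((i : ℤ) - 1) + 2 * i := by ring
      omega
    rw [zpow_add_one, ih]
    erw [mul_def']
    rw [key]
    refine Prod.ext ?_ (Prod.ext ?_ ?_)
    · show g.1 ^ (i : ℤ) * (g.2.2 g.2.1) ^ ((i : ℤ) * ((i : ℤ) - 1) / 2) * g.1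
          * g.2.2 ((i : ℤ) • g.2.1)
        = g.1 ^ ((i : ℤ) + 1) * (g.2.2 g.2.1) ^ ((i : ℤ) * ((i : ℤ) - 1) / 2 + (i : ℤ))
      rw [AddChar.map_zsmul_eq_zpow, zpow_add, zpow_add (g.2.2 g.2.1)]
      simp only [zpow_one, mul_comm, mul_left_comm, mul_assoc]
    · show (i : ℤ) • g.2.1 + g.2.1 = ((i : ℤ) + 1) • g.2.1
      rw [add_zsmul, one_zsmul]
    · show g.2.2 ^ (i : ℤ) * g.2.2 = g.2.2 ^ ((i : ℤ) + 1)
      rw [zpow_add_one]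
  | pred i ih =>
    have key : (-(i : ℤ) - 1) * (-(i : ℤ) - 1 - 1) / 2
        = -(i : ℤ) * (-(i : ℤ) - 1) / 2 + 1 + i := by
      have h1 := two_mul_ediv (-(i : ℤ))
      have h2 := two_mul_ediv (-(i : ℤ) - 1)
      have h3 : (-(i : ℤ) - 1) * (-(i : ℤ) - 1 - 1)
          = -(i : ℤ) * (-(i : ℤ) - 1) + 2 + 2 * i := by ring
      omega
    rw [zpow_sub_one, ih, inv_def']
    erw [mul_def']
    rw [key]
    refine Prod.ext ?_ (Prod.ext ?_ ?_)
    · show g.1 ^ (-(i : ℤ)) * (g.2.2 g.2.1) ^ (-(i : ℤ) * (-(i : ℤ) - 1) / 2)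
          * ((g.1)⁻¹ * g.2.2 g.2.1) * (g.2.2)⁻¹ ((-(i : ℤ)) • g.2.1)
        = g.1 ^ (-(i : ℤ) - 1)
          * (g.2.2 g.2.1) ^ (-(i : ℤ) * (-(i : ℤ) - 1) / 2 + 1 + (i : ℤ))
      rw [AddChar.inv_apply', AddChar.map_zsmul_eq_zpow, ← zpow_neg, zpow_sub_one]
      rw [zpow_add, zpow_add]
      simp only [neg_neg, zpow_one]
      try simp only [mul_comm, mul_left_comm, mul_assoc]
    · show (-(i : ℤ)) • g.2.1 + -g.2.1 = (-(i : ℤ) - 1) • g.2.1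
      rw [sub_zsmul, one_zsmul]
    · show g.2.2 ^ (-(i : ℤ)) * (g.2.2)⁻¹ = g.2.2 ^ (-(i : ℤ) - 1)
      rw [zpow_sub_one]

/-- Every element `g` of the standard theta group satisfies
`D_m(g) = g^{(m²+m)/2} · D_{-1}(g)^{(m²-m)/2}`. -/
theorem Dm_eq_pow_mul_Dneg1_pow (m : ℤ) (g : ThetaGroup k K) :
    Dm m g = g ^ ((m ^ 2 + m) / 2) * Dneg1 g ^ ((m ^ 2 - m) / 2) := by
  have ha : 2 * ((m ^ 2 + m) / 2) = m ^ 2 + m := by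
    obtain ⟨p, hp⟩ : Even (m ^ 2 + m) := by
      have h := Int.even_mul_succ_self m
      have : m * (m + 1) = m ^ 2 + m := by ring
      rwa [this] at h
    omega
  have hb : 2 * ((m ^ 2 - m) / 2) = m ^ 2 - m := by
    obtain ⟨p, hp⟩ : Even (m ^ 2 - m) := by
      have h := Int.even_mul_succ_self (m - 1)
      have : (m - 1) * (m - 1 + 1) = m ^ 2 - m := by ring
      rwa [this] at h
    omega
  set a : ℤ := (m ^ 2 + m) / 2 with hadef
  set b : ℤ := (m ^ 2 - m) / 2 with hbdef
  have hab : a + b = m ^ 2 := by omega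
  have hamb : a - b = m := by omega
  have hcfix : (g.2.2)⁻¹ (-g.2.1) = g.2.2 g.2.1 := by
    rw [AddChar.inv_apply', AddChar.map_neg_eq_inv, inv_inv]
  have hDneg : (Dneg1 g) ^ b
      = ((g.1) ^ b * (g.2.2 g.2.1) ^ (b * (b - 1) / 2), b • (-g.2.1), ((g.2.2)⁻¹) ^ b) := by
    rw [zpow_def' (Dneg1 g) b]
    show ((Dneg1 g).1 ^ b * ((Dneg1 g).2.2 (Dneg1 g).2.1) ^ _, _, _) = _
    rw [show (Dneg1 g).1 = g.1 from rfl, show (Dneg1 g).2.1 = -g.2.1 from rfl,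
      show (Dneg1 g).2.2 = (g.2.2)⁻¹ from rfl, hcfix]
  rw [zpow_def' g a, hDneg]
  erw [mul_def']
  have hE : a * (a - 1) / 2 + b * (b - 1) / 2 + -(a * b) = 0 := by
    have h1 := two_mul_ediv a
    have h2 := two_mul_ediv b
    have h3 : a * (a - 1) + b * (b - 1) = 2 * (a * b) := by
      have : (a - b) ^ 2 = (a + b) := by rw [hamb, hab]
      nlinarith [this]
    omega
  refine Prod.ext ?_ (Prod.ext ?_ ?_)
  · show g.1 ^ (m ^ 2)
      = g.1 ^ a * (g.2.2 g.2.1) ^ (a * (a - 1) / 2)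
        * (g.1 ^ b * (g.2.2 g.2.1) ^ (b * (b - 1) / 2)) * ((g.2.2)⁻¹ ^ b) (a • g.2.1)
    have h4 : ((g.2.2 g.2.1 ^ a)⁻¹) ^ b = g.2.2 g.2.1 ^ (-(a * b)) := by
      rw [← zpow_neg, ← zpow_mul]
      congr 1
      ring
    have h5 : g.2.2 g.2.1 ^ (a * (a - 1) / 2) * g.2.2 g.2.1 ^ (b * (b - 1) / 2)
        * g.2.2 g.2.1 ^ (-(a * b)) = 1 := by
      rw [← zpow_add, ← zpow_add, hE, zpow_zero]
    rw [AddChar.zpow_apply, AddChar.inv_apply', AddChar.map_zsmul_eq_zpow, h4, ← hab, zpow_add]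
    calc g.1 ^ a * g.1 ^ b
        = g.1 ^ a * g.1 ^ b * (g.2.2 g.2.1 ^ (a * (a - 1) / 2)
            * g.2.2 g.2.1 ^ (b * (b - 1) / 2) * g.2.2 g.2.1 ^ (-(a * b))) := by
          rw [h5, mul_one]
      _ = _ := by simp only [mul_comm, mul_left_comm, mul_assoc]
  · show m • g.2.1 = a • g.2.1 + b • (-g.2.1)
    rw [smul_neg, ← hamb, sub_zsmul]
  · show g.2.2 ^ m = g.2.2 ^ a * (g.2.2)⁻¹ ^ b
    rw [inv_zpow, ← zpow_neg, ← zpow_add, ← hamb]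
    rfl


end ThetaGroup
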